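/- For all a ∈ A with deg a < d, χ_t(a) = Σ_{j=0}^{d-1} b_j(t)·E_j(a) in A[t]. -/

import Mathlib

noncomputable section
open Polynomial

variable (Fq : Type) [Field Fq] [Fintype Fq]

/-- The polynomial `∑ i, c i * θ^i` determined by a tuple `c : Fin d → Fq`;
as `c` ranges over all tuples this enumerates `A(d)`. -/
def polyOf {d : ℕ} (c : Fin d → Fq) : Polynomial Fq :=
  ∑ i : Fin d, C (c i) * X ^ (i : ℕ)

/-- `D_d`, the product of all monic polynomials of degree `d` in `A = 𝔽_q[θ]`. -/
def Dmonic (d : ℕ) : Polynomial Fq :=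
  ∏ c : Fin d → Fq, (X ^ d + polyOf Fq c)

/-- The normalized Carlitz polynomial `E_d(z) = D_d⁻¹ ∏_{a ∈ A(d)} (z - a) ∈ K[z]`. -/
def Ecar (d : ℕ) : Polynomial (RatFunc Fq) :=
  C (algebraMap (Polynomial Fq) (RatFunc Fq) (Dmonic Fq d))⁻¹ *
    ∏ c : Fin d → Fq, (X - C (algebraMap (Polynomial Fq) (RatFunc Fq) (polyOf Fq c)))

/-- `b_j(t) = ∏_{i=0}^{j-1} (t - θ^{q^i}) ∈ K[t]`. -/
def bK (j : ℕ) : Polynomial (RatFunc Fq) :=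
  ∏ i ∈ Finset.range j,
    (X - C (algebraMap (Polynomial Fq) (RatFunc Fq) ((X : Polynomial Fq) ^ (Fintype.card Fq) ^ i)))

/-- `χ_t(a)`: the image of `a ∈ A` under the `𝔽_q`-algebra morphism `θ ↦ t`. -/
def chiK (a : Polynomial Fq) : Polynomial (RatFunc Fq) :=
  a.map (algebraMap Fq (RatFunc Fq))


local notation "K" => RatFunc Fq
local notation "ι" => algebraMap (Polynomial Fq) (RatFunc Fq)
local notation "φ" => algebraMap Fq (RatFunc Fq)
local notation "q" => Fintype.card Fq

def eP (j : ℕ) : Polynomial (RatFunc Fq) :=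
  ∏ c : Fin j → Fq, (X - C (ι (polyOf Fq c)))

set_option linter.unusedSectionVars false

variable {Fq}

lemma polyOf_degree_lt' {d : ℕ} (c : Fin d → Fq) : (polyOf Fq c).degree < d := by
  apply lt_of_le_of_lt (degree_sum_le _ _)
  rw [Finset.sup_lt_iff]
  swap
  · exact WithBot.bot_lt_coe d
  intro i _
  apply lt_of_le_of_lt (degree_C_mul_X_pow_le _ _)
  exact_mod_cast i.2

lemma coeff_polyOf {d : ℕ} (c : Fin d → Fq) (i : Fin d) :
    (polyOf Fq c).coeff i = c i := by
  rw [polyOf, finset_sum_coeff]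
  rw [Finset.sum_eq_single i]
  · simp
  · intro b _ hb
    simp only [coeff_C_mul, coeff_X_pow, mul_ite, mul_one, mul_zero, ite_eq_right_iff]
    intro h
    exact absurd ((Fin.val_eq_val _ _).1 h.symm) hb
  · simp

lemma exists_polyOf {d : ℕ} (a : Polynomial Fq) (ha : a.degree < (d : WithBot ℕ)) :
    ∃ c : Fin d → Fq, polyOf Fq c = a := by
  refine ⟨fun i => a.coeff i, ?_⟩
  ext n
  by_cases hn : n < d
  · exact coeff_polyOf _ ⟨n, hn⟩
  · rw [coeff_eq_zero_of_degree_lt (lt_of_lt_of_le ha (by exact_mod_cast Nat.le_of_not_lt hn))]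
    exact coeff_eq_zero_of_degree_lt (lt_of_lt_of_le (polyOf_degree_lt' _)
      (by exact_mod_cast Nat.le_of_not_lt hn))

lemma polyOf_injective {d : ℕ} : Function.Injective (polyOf Fq (d := d)) := by
  intro c c' h
  funext i
  rw [← coeff_polyOf c i, ← coeff_polyOf c' i, h]


lemma iota_injective : Function.Injective (ι) := IsFractionRing.injective _ _

lemma monic_eP (j : ℕ) : (eP Fq j).Monic :=
  monic_prod_of_monic _ _ (fun _ _ => monic_X_sub_C _)

lemma natDegree_eP (j : ℕ) : (eP Fq j).natDegree = q ^ j := by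
  rw [eP, natDegree_prod _ _ (fun c _ => X_sub_C_ne_zero _)]
  simp [natDegree_X_sub_C, Fintype.card_fun]

lemma eP_ne_zero (j : ℕ) : eP Fq j ≠ 0 := (monic_eP j).ne_zero

lemma eval_eP_root {j : ℕ} (c : Fin j → Fq) : (eP Fq j).eval (ι (polyOf Fq c)) = 0 := by
  rw [eP, eval_prod]
  exact Finset.prod_eq_zero (Finset.mem_univ c) (by simp)

lemma eq_zero_of_deg_lt {j : ℕ} (p : Polynomial K)
    (hdeg : p.degree < ((q ^ j : ℕ) : WithBot ℕ))
    (h : ∀ c : Fin j → Fq, p.eval (ι (polyOf Fq c)) = 0) : p = 0 := by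
  rcases eq_or_ne p 0 with hp | hp
  · exact hp
  refine eq_zero_of_natDegree_lt_card_of_eval_eq_zero p
    (f := fun c : Fin j → Fq => ι (polyOf Fq c)) ?_ h ?_
  · exact fun a b hab => polyOf_injective (iota_injective hab)
  · rw [Fintype.card_fun]
    simpa using (natDegree_lt_iff_degree_lt hp).2 hdeg

lemma polyOf_sub' {d : ℕ} (c c' : Fin d → Fq) :
    polyOf Fq (c - c') = polyOf Fq c - polyOf Fq c' := by
  simp [polyOf, ← Finset.sum_sub_distrib, sub_mul, C_sub]

lemma eP_comp_root {j : ℕ} (c₀ : Fin j → Fq) :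
    (eP Fq j).comp (X + C (ι (polyOf Fq c₀))) = eP Fq j := by
  rw [eP, prod_comp]
  refine Fintype.prod_equiv (Equiv.subRight c₀) _ _ (fun c => ?_)
  rw [sub_comp, X_comp, C_comp, Equiv.subRight_apply, polyOf_sub', map_sub, C_sub]
  ring

lemma eval_eP_add_root {j : ℕ} (u : K) (c₀ : Fin j → Fq) :
    (eP Fq j).eval (u + ι (polyOf Fq c₀)) = (eP Fq j).eval u := by
  conv_rhs => rw [← eP_comp_root c₀]
  rw [eval_comp]
  simp

lemma eval_eP_add {j : ℕ} (u v : K) :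
    (eP Fq j).eval (u + v) = (eP Fq j).eval u + (eP Fq j).eval v := by
  have hq : (0 : WithBot ℕ) < ((q ^ j : ℕ) : WithBot ℕ) := by
    exact_mod_cast pow_pos Fintype.card_pos j
  set P := (eP Fq j).comp (X + C u) - eP Fq j - C ((eP Fq j).eval u) with hP
  have hcompmonic : ((eP Fq j).comp (X + C u)).Monic :=
    (monic_eP j).comp (monic_X_add_C u) (by simp)
  have hdeg1 : ((eP Fq j).comp (X + C u)).degree = (eP Fq j).degree := by
    rw [degree_eq_natDegree hcompmonic.ne_zero, degree_eq_natDegree (eP_ne_zero j),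
      natDegree_comp]
    simp
  have hdegsub : ((eP Fq j).comp (X + C u) - eP Fq j).degree < ((q ^ j : ℕ) : WithBot ℕ) := by
    have := degree_sub_lt hdeg1 hcompmonic.ne_zero
      (by rw [hcompmonic.leadingCoeff, (monic_eP j).leadingCoeff])
    rwa [hdeg1, degree_eq_natDegree (eP_ne_zero j), natDegree_eP] at this
  have hPz : P = 0 := by
    apply eq_zero_of_deg_lt
    · refine lt_of_le_of_lt (degree_sub_le _ _) (max_lt hdegsub ?_)
      exact lt_of_le_of_lt degree_C_le hq
    · intro c
      simp only [hP, eval_sub, eval_comp, eval_add, eval_X, eval_C, eval_eP_root, sub_zero]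
      rw [add_comm (algebraMap (Polynomial Fq) (RatFunc Fq) (polyOf Fq c)) u, eval_eP_add_root]
      ring
  have := congrArg (eval v) hPz
  simp only [hP, eval_sub, eval_comp, eval_add, eval_X, eval_C, eval_zero] at this
  rw [add_comm v u] at this
  linear_combination this

lemma eval_eP_zero (j : ℕ) : (eP Fq j).eval 0 = 0 := by
  have := eval_eP_root (j := j) (0 : Fin j → Fq)
  simpa [polyOf] using this

lemma iota_C (a : Fq) : ι (C a) = φ a := by
  rw [← Polynomial.algebraMap_eq, ← IsScalarTower.algebraMap_apply]

lemma polyOf_smul' {d : ℕ} (l : Fq) (c : Fin d → Fq) :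
    polyOf Fq (fun i => l * c i) = C l * polyOf Fq c := by
  simp [polyOf, Finset.mul_sum, C_mul, mul_assoc]

lemma eval_eP_smul {j : ℕ} (l : Fq) (u : K) :
    (eP Fq j).eval (φ l * u) = φ l * (eP Fq j).eval u := by
  rcases eq_or_ne l 0 with rfl | hl
  · simp [eval_eP_zero]
  have hφl : φ l ≠ 0 :=
    (map_ne_zero_iff (algebraMap Fq K) (algebraMap Fq K).injective).2 hl
  have key : ∀ c : Fin j → Fq,
      φ l * u - ι (polyOf Fq c) = φ l * (u - ι (polyOf Fq (fun i => l⁻¹ * c i))) := by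
    intro c
    rw [polyOf_smul', map_mul, iota_C, mul_sub, ← mul_assoc, ← map_mul,
      mul_inv_cancel₀ hl, map_one, one_mul]
  rw [eP, eval_prod]
  simp only [eval_sub, eval_X, eval_C]
  calc (∏ c : Fin j → Fq, (φ l * u - ι (polyOf Fq c)))
      = ∏ c : Fin j → Fq, φ l * (u - ι (polyOf Fq (fun i => l⁻¹ * c i))) := by
        exact Finset.prod_congr rfl (fun c _ => key c)
    _ = (φ l) ^ (q ^ j) * ∏ c : Fin j → Fq, (u - ι (polyOf Fq (fun i => l⁻¹ * c i))) := by
        rw [Finset.prod_mul_distrib, Finset.prod_const, Finset.card_univ, Fintype.card_fun,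
          Fintype.card_fin]
    _ = φ l * ∏ c : Fin j → Fq, (u - ι (polyOf Fq c)) := by
        rw [← map_pow, FiniteField.pow_card_pow]
        congr 1
        refine Fintype.prod_equiv
          (Equiv.piCongrRight (fun _ => Equiv.mulLeft₀ l⁻¹ (inv_ne_zero hl))) _ _
          (fun c => ?_)
        congr 2
    _ = φ l * (eP Fq j).eval u := by rw [eP, eval_prod]; simp

lemma eval_eP_sum {j : ℕ} {α : Type*} (s : Finset α) (f : α → K) :
    (eP Fq j).eval (∑ i ∈ s, f i) = ∑ i ∈ s, (eP Fq j).eval (f i) := by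
  classical
  induction s using Finset.induction with
  | empty => simp [eval_eP_zero]
  | @insert x s hx ih => rw [Finset.sum_insert hx, Finset.sum_insert hx, eval_eP_add, ih]

lemma monic_Dmonic (d : ℕ) : (Dmonic Fq d).Monic := by
  refine monic_prod_of_monic _ _ (fun c _ => ?_)
  refine (monic_X_pow d).add_of_left ?_
  rw [degree_X_pow]
  exact polyOf_degree_lt' c

lemma DK_ne_zero (d : ℕ) : ι (Dmonic Fq d) ≠ 0 := by
  rw [map_ne_zero_iff _ iota_injective]
  exact (monic_Dmonic d).ne_zero

lemma polyOf_neg {d : ℕ} (c : Fin d → Fq) : polyOf Fq (-c) = - polyOf Fq c := by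
  simp [polyOf, ← Finset.sum_neg_distrib, neg_mul, C_neg]

lemma iota_Dmonic (d : ℕ) : ι (Dmonic Fq d) = (eP Fq d).eval ((ι X) ^ d) := by
  rw [Dmonic, map_prod, eP, eval_prod]
  refine Fintype.prod_equiv (Equiv.neg _) _ _ (fun c => ?_)
  simp only [eval_sub, eval_X, eval_C, eval_neg, Equiv.neg_apply, polyOf_neg, map_neg,
    map_add, map_pow]
  ring

lemma polyOf_succ {j : ℕ} (c : Fin (j+1) → Fq) :
    polyOf Fq c = polyOf Fq (c ∘ Fin.castSucc) + C (c (Fin.last j)) * X ^ j := by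
  rw [polyOf, Fin.sum_univ_castSucc]
  simp [polyOf]

lemma eval_eP_of_lt {j : ℕ} (c : Fin (j+1) → Fq) :
    (eP Fq j).eval (ι (polyOf Fq c)) = φ (c (Fin.last j)) * ι (Dmonic Fq j) := by
  rw [polyOf_succ, map_add, eval_eP_add, eval_eP_root, zero_add, map_mul, iota_C, map_pow,
    eval_eP_smul, iota_Dmonic]

lemma polyOf_mul_X {d : ℕ} (c : Fin d → Fq) :
    (X : Polynomial Fq) * polyOf Fq c = polyOf Fq (Fin.cons 0 c) := by
  rw [polyOf, polyOf, Fin.sum_univ_succ]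
  simp only [Fin.cons_zero, Fin.cons_succ, map_zero, zero_mul, zero_add, Fin.val_succ,
    Fin.val_zero, pow_zero, Finset.mul_sum]
  refine Finset.sum_congr rfl (fun i _ => ?_)
  ring

lemma thetaK_ne_zero : (ι (X : Polynomial Fq)) ≠ 0 := by
  rw [map_ne_zero_iff _ iota_injective]
  exact X_ne_zero

lemma eval_eP_theta (j : ℕ) (u : K) :
    (eP Fq (j+1)).eval (ι X * u) =
      (ι X) ^ q ^ (j+1) * (eP Fq (j+1)).eval u
        + (ι (Dmonic Fq (j+1)) / ι (Dmonic Fq j)) * (eP Fq j).eval u := by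
  have hθ : (ι (X : Polynomial Fq)) ≠ 0 := thetaK_ne_zero
  have hθp : ((ι (X : Polynomial Fq)) ^ q ^ (j+1)) ≠ 0 := pow_ne_zero _ hθ
  have hleadA : ((eP Fq (j+1)).comp (C (ι (X : Polynomial Fq)) * X)).leadingCoeff
      = (ι (X : Polynomial Fq)) ^ q ^ (j+1) := by
    rw [leadingCoeff_comp (by rw [natDegree_C_mul hθ, natDegree_X]; exact one_ne_zero)]
    rw [(monic_eP (j+1)).leadingCoeff, one_mul, leadingCoeff_C_mul_X, natDegree_eP]
  have hAne : (eP Fq (j+1)).comp (C (ι (X : Polynomial Fq)) * X) ≠ 0 := by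
    intro h0
    rw [h0, leadingCoeff_zero] at hleadA
    exact hθp hleadA.symm
  have hdegA : ((eP Fq (j+1)).comp (C (ι (X : Polynomial Fq)) * X)).degree
      = ((q ^ (j+1) : ℕ) : WithBot ℕ) := by
    rw [degree_eq_natDegree hAne, natDegree_comp, natDegree_C_mul hθ, natDegree_X, mul_one,
      natDegree_eP]
  have hdegB : (C ((ι (X : Polynomial Fq)) ^ q ^ (j+1)) * eP Fq (j+1)).degree
      = ((q ^ (j+1) : ℕ) : WithBot ℕ) := by
    rw [degree_C_mul hθp, degree_eq_natDegree (eP_ne_zero (j+1)), natDegree_eP]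
  have hleadB : (C ((ι (X : Polynomial Fq)) ^ q ^ (j+1)) * eP Fq (j+1)).leadingCoeff
      = (ι (X : Polynomial Fq)) ^ q ^ (j+1) := by
    rw [leadingCoeff_mul, leadingCoeff_C, (monic_eP _).leadingCoeff, mul_one]
  have hq1 : 1 < q := Fintype.one_lt_card
  have hqlt : ((q ^ j : ℕ) : WithBot ℕ) < ((q ^ (j+1) : ℕ) : WithBot ℕ) := by
    exact_mod_cast Nat.pow_lt_pow_succ hq1
  have hPz : (eP Fq (j+1)).comp (C (ι (X : Polynomial Fq)) * X)
      - C ((ι (X : Polynomial Fq)) ^ q ^ (j+1)) * eP Fq (j+1)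
      - C (ι (Dmonic Fq (j+1)) / ι (Dmonic Fq j)) * eP Fq j = 0 := by
    apply eq_zero_of_deg_lt (j := j + 1)
    · refine lt_of_le_of_lt (degree_sub_le _ _) (max_lt ?_ ?_)
      · refine lt_of_lt_of_le (degree_sub_lt (hdegA.trans hdegB.symm) hAne
          (hleadA.trans hleadB.symm)) (le_of_eq hdegA)
      · refine lt_of_le_of_lt (degree_mul_le _ _) ?_
        refine lt_of_le_of_lt (add_le_add degree_C_le (le_of_eq
          (degree_eq_natDegree (eP_ne_zero j)))) ?_
        rw [natDegree_eP, zero_add]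
        exact hqlt
    · intro c
      simp only [eval_sub, eval_mul, eval_comp, eval_C, eval_X, eval_eP_root, mul_zero, sub_zero]
      rw [← map_mul, polyOf_mul_X, eval_eP_of_lt (j := j + 1), eval_eP_of_lt (j := j)]
      have hlast : (Fin.cons 0 c : Fin (j+2) → Fq) (Fin.last (j+1)) = c (Fin.last j) := by
        rw [show (Fin.last (j+1)) = Fin.succ (Fin.last j) from rfl, Fin.cons_succ]
      rw [hlast]
      field_simp [DK_ne_zero j]
      ring
  have h2 := congrArg (eval u) hPz
  simp only [eval_sub, eval_mul, eval_comp, eval_C, eval_X, eval_zero] at h2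
  linear_combination h2

lemma eval_Ecar (d : ℕ) (u : K) :
    (Ecar Fq d).eval u = (ι (Dmonic Fq d))⁻¹ * (eP Fq d).eval u := by
  rw [show Ecar Fq d = C (ι (Dmonic Fq d))⁻¹ * eP Fq d from rfl, eval_mul, eval_C]

lemma polyOf_single {j : ℕ} (k : Fin j) :
    polyOf Fq (Pi.single k (1 : Fq)) = X ^ (k : ℕ) := by
  rw [polyOf, Finset.sum_eq_single k]
  · simp
  · intro b _ hb
    rw [Pi.single_eq_of_ne hb, map_zero, zero_mul]
  · simp

lemma Ecar_root_pow {i j : ℕ} (h : i < j) : (Ecar Fq j).eval ((ι X) ^ i) = 0 := by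
  rw [eval_Ecar, ← map_pow, ← polyOf_single (⟨i, h⟩ : Fin j), eval_eP_root, mul_zero]

lemma Ecar_zero_eval (u : K) : (Ecar Fq 0).eval u = u := by
  have h1 : polyOf Fq (fun i : Fin 0 => (0 : Fq)) = 0 := by simp [polyOf]
  have h2 : Dmonic Fq 0 = 1 := by
    rw [Dmonic, Fintype.prod_subsingleton _ (fun i : Fin 0 => (0 : Fq))]
    simp [h1]
  rw [eval_Ecar, h2, map_one, inv_one, one_mul,
    show eP Fq 0 = ∏ c : Fin 0 → Fq, (X - C (ι (polyOf Fq c))) from rfl,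
    Fintype.prod_subsingleton _ (fun i : Fin 0 => (0 : Fq))]
  simp [h1]

lemma Ecar_theta_zero (u : K) : (Ecar Fq 0).eval (ι X * u) = ι X * (Ecar Fq 0).eval u := by
  rw [Ecar_zero_eval, Ecar_zero_eval]

lemma Ecar_theta (j : ℕ) (u : K) :
    (Ecar Fq (j+1)).eval (ι X * u) =
      (ι X) ^ q ^ (j+1) * (Ecar Fq (j+1)).eval u + (Ecar Fq j).eval u := by
  rw [eval_Ecar, eval_Ecar, eval_Ecar, eval_eP_theta]
  field_simp [DK_ne_zero j, DK_ne_zero (j+1)]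

lemma bK_zero : bK Fq 0 = 1 := by rw [bK, Finset.range_zero, Finset.prod_empty]

lemma X_mul_bK (j : ℕ) :
    (X : Polynomial K) * bK Fq j = bK Fq (j+1) + C ((ι X) ^ q ^ j) * bK Fq j := by
  rw [show bK Fq (j+1) = ∏ i ∈ Finset.range (j+1),
      (X - C (ι ((X : Polynomial Fq) ^ q ^ i))) from rfl, Finset.prod_range_succ]
  rw [show bK Fq j = ∏ i ∈ Finset.range j,
      (X - C (ι ((X : Polynomial Fq) ^ q ^ i))) from rfl]
  rw [map_pow]
  ring

lemma key (d i : ℕ) (hi : i < d) :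
    ∑ j ∈ Finset.range d, bK Fq j * C ((Ecar Fq j).eval ((ι X) ^ i)) =
      (X : Polynomial K) ^ i := by
  induction i with
  | zero =>
    rw [Finset.sum_eq_single 0]
    · rw [bK_zero, pow_zero, Ecar_zero_eval, map_one, one_mul, pow_zero]
    · intro j hj hj0
      obtain ⟨m, rfl⟩ := Nat.exists_eq_succ_of_ne_zero hj0
      rw [Ecar_root_pow (Nat.succ_pos m), map_zero, mul_zero]
    · intro h
      exact absurd (Finset.mem_range.2 (by omega)) h
  | succ i ih =>
    obtain ⟨e, rfl⟩ : ∃ e, d = e + 1 := ⟨d - 1, by omega⟩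
    have hI := ih (by omega)
    have hie : i < e := by omega
    calc ∑ j ∈ Finset.range (e+1), bK Fq j * C ((Ecar Fq j).eval ((ι X) ^ (i+1)))
        = (∑ j ∈ Finset.range e,
            bK Fq (j+1) * C ((ι X) ^ q ^ (j+1) * (Ecar Fq (j+1)).eval ((ι X) ^ i))
          + ∑ j ∈ Finset.range e, bK Fq (j+1) * C ((Ecar Fq j).eval ((ι X) ^ i)))
          + bK Fq 0 * C ((ι X) ^ q ^ 0 * (Ecar Fq 0).eval ((ι X) ^ i)) := by
          rw [Finset.sum_range_succ']
          congr 1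
          · rw [← Finset.sum_add_distrib]
            refine Finset.sum_congr rfl (fun j _ => ?_)
            rw [pow_succ, mul_comm ((ι X) ^ i) (ι X), Ecar_theta, map_add, mul_add]
          · rw [pow_succ, mul_comm ((ι X) ^ i) (ι X), Ecar_theta_zero, pow_zero, pow_one]
      _ = ∑ j ∈ Finset.range (e+1),
            bK Fq j * C ((ι X) ^ q ^ j * (Ecar Fq j).eval ((ι X) ^ i))
          + ∑ j ∈ Finset.range (e+1), bK Fq (j+1) * C ((Ecar Fq j).eval ((ι X) ^ i)) := by
          rw [Finset.sum_range_succ' (fun j =>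
            bK Fq j * C ((ι X) ^ q ^ j * (Ecar Fq j).eval ((ι X) ^ i))) e]
          rw [Finset.sum_range_succ (fun j =>
            bK Fq (j+1) * C ((Ecar Fq j).eval ((ι X) ^ i))) e]
          rw [Ecar_root_pow hie, map_zero, mul_zero, add_zero]
          ring
      _ = ∑ j ∈ Finset.range (e+1),
            (X : Polynomial K) * bK Fq j * C ((Ecar Fq j).eval ((ι X) ^ i)) := by
          rw [← Finset.sum_add_distrib]
          refine Finset.sum_congr rfl (fun j _ => ?_)
          rw [X_mul_bK, C_mul]
          ring
      _ = (X : Polynomial K) ^ (i+1) := by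
          simp only [mul_assoc]
          rw [← Finset.mul_sum, hI, pow_succ, mul_comm]


variable (Fq)

/-- For all `a ∈ A` of degree `< d`, `χ_t(a) = ∑_{j=0}^{d-1} b_j(t)·E_j(a)`
(an identity of polynomials in `t`). -/
theorem chi_eq_sum_b_E (d : ℕ) (a : Polynomial Fq) (ha : a.degree < (d : WithBot ℕ)) :
    chiK Fq a =
      ∑ j ∈ Finset.range d,
        bK Fq j * Polynomial.C ((Ecar Fq j).eval (algebraMap (Polynomial Fq) (RatFunc Fq) a)) := by

  obtain ⟨c, rfl⟩ := exists_polyOf a ha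
  have hiota : ι (polyOf Fq c) = ∑ i : Fin d, φ (c i) * (ι X) ^ (i : ℕ) := by
    rw [polyOf, map_sum]
    exact Finset.sum_congr rfl (fun i _ => by rw [map_mul, iota_C, map_pow])
  have hEval : ∀ j, (Ecar Fq j).eval (ι (polyOf Fq c)) =
      ∑ i : Fin d, φ (c i) * (Ecar Fq j).eval ((ι X) ^ (i : ℕ)) := by
    intro j
    rw [eval_Ecar, hiota, eval_eP_sum, Finset.mul_sum]
    refine Finset.sum_congr rfl (fun i _ => ?_)
    rw [eval_eP_smul, eval_Ecar]
    ring
  calc chiK Fq (polyOf Fq c) = ∑ i : Fin d, C (φ (c i)) * X ^ (i : ℕ) := by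
        rw [chiK, polyOf, Polynomial.map_sum]
        refine Finset.sum_congr rfl (fun i _ => ?_)
        rw [Polynomial.map_mul, map_C, Polynomial.map_pow, map_X]
    _ = ∑ i : Fin d, C (φ (c i)) *
          (∑ j ∈ Finset.range d, bK Fq j * C ((Ecar Fq j).eval ((ι X) ^ (i : ℕ)))) := by
        refine Finset.sum_congr rfl (fun i _ => ?_)
        rw [key d i i.2]
    _ = ∑ j ∈ Finset.range d, bK Fq j * C ((Ecar Fq j).eval (ι (polyOf Fq c))) := by
        simp only [Finset.mul_sum]
        rw [Finset.sum_comm]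
        refine Finset.sum_congr rfl (fun j _ => ?_)
        rw [hEval j, map_sum, Finset.mul_sum]
        refine Finset.sum_congr rfl (fun i _ => ?_)
        rw [map_mul]
        ring
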